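/- Let 𝔽 be a finite field with q elements, let 2 ≤ t ≤ k, let W be a k-dimensional 𝔽-vector space, and let y be a 1-dimensional subspace of W. Then the number of (t−1)-dimensional subspaces D of W with y ⊄ D equals q^{t−1} times the number of (t−1)-dimensional subspaces of a (k−1)-dimensional 𝔽-vector space. (This is the column-weight count: every column of the matrix C associated with a t-(v,k,1)_q subspace design contains exactly [k−1 choose t−1]_q · q^{t−1} ones.) -/

import Mathlib

open Module

section Aux

variable {𝔽 : Type*} [Field 𝔽] [Fintype 𝔽]
  {V : Type*} [AddCommGroup V] [Module 𝔽 V] [FiniteDimensional 𝔽 V]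

private lemma graph_inj (E : Submodule 𝔽 V) (f : E →ₗ[𝔽] 𝔽) :
    Function.Injective (LinearMap.prod f E.subtype) := fun a b h =>
  Subtype.ext (congrArg Prod.snd h)

private lemma map_snd_graph (E : Submodule 𝔽 V) (f : E →ₗ[𝔽] 𝔽) :
    Submodule.map (LinearMap.snd 𝔽 𝔽 V) (LinearMap.range (LinearMap.prod f E.subtype)) = E := by
  rw [← LinearMap.range_comp, LinearMap.snd_prod, Submodule.range_subtype]

private lemma graph_rank (E : Submodule 𝔽 V) (f : E →ₗ[𝔽] 𝔽) :
    finrank 𝔽 (LinearMap.range (LinearMap.prod f E.subtype)) = finrank 𝔽 E :=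
  LinearMap.finrank_range_of_inj (graph_inj E f)

private lemma graph_not_fst (E : Submodule 𝔽 V) (f : E →ₗ[𝔽] 𝔽) :
    ¬ Submodule.fst 𝔽 𝔽 V ≤ LinearMap.range (LinearMap.prod f E.subtype) := by
  intro hle
  have hmem : ((1 : 𝔽), (0 : V)) ∈ Submodule.fst 𝔽 𝔽 V := by
    simp [Submodule.fst]
  obtain ⟨e, he⟩ := hle hmem
  have he2 : (e : V) = 0 := congrArg Prod.snd he
  have h0 : e = 0 := Subtype.ext he2
  rw [h0] at he
  have : (0 : 𝔽) = 1 := by simpa using congrArg Prod.fst he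
  exact zero_ne_one this

private lemma stmt13_aux (q m : ℕ) (hq : Fintype.card 𝔽 = q) :
    Nat.card {D : Submodule 𝔽 (𝔽 × V) // finrank 𝔽 D = m ∧ ¬ Submodule.fst 𝔽 𝔽 V ≤ D}
      = q ^ m * Nat.card {E : Submodule 𝔽 V // finrank 𝔽 E = m} := by
  classical
  have hfV : Finite V := Module.finite_of_finite 𝔽
  have hfSub : Finite (Submodule 𝔽 V) :=
    Finite.of_injective (fun p => (p : Set V)) (fun a b h => by simpa using h)
  have key : Nat.card (Σ E : {E : Submodule 𝔽 V // finrank 𝔽 E = m}, ((E.1 : Submodule 𝔽 V) →ₗ[𝔽] 𝔽))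
      = Nat.card {D : Submodule 𝔽 (𝔽 × V) // finrank 𝔽 D = m ∧ ¬ Submodule.fst 𝔽 𝔽 V ≤ D} := by
    apply Nat.card_eq_of_bijective
      (fun p => ⟨LinearMap.range (LinearMap.prod p.2 ((p.1.1 : Submodule 𝔽 V)).subtype),
        (graph_rank _ _).trans p.1.2, graph_not_fst _ _⟩)
    constructor
    · -- injective
        rintro ⟨⟨E₁, h₁⟩, f₁⟩ ⟨⟨E₂, h₂⟩, f₂⟩ hFF
        simp only [Subtype.mk.injEq] at hFF
        obtain rfl : E₁ = E₂ := by
          rw [← map_snd_graph E₁ f₁, ← map_snd_graph E₂ f₂, hFF]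
        have hf : f₁ = f₂ := by
          ext e
          have hmem : LinearMap.prod f₁ E₁.subtype e ∈
              LinearMap.range (LinearMap.prod f₂ E₁.subtype) := by
            rw [← hFF]; exact ⟨e, rfl⟩
          obtain ⟨e', he'⟩ := hmem
          obtain rfl : e' = e := Subtype.ext (congrArg Prod.snd he')
          exact (congrArg Prod.fst he').symm
        cases hf
        rfl
    · -- surjective
        rintro ⟨D, hD, hDfst⟩
        have hdisj : ∀ x ∈ D, Prod.snd x = 0 → x = 0 := by
          intro x hx hx2
          by_contra hx0
          apply hDfst
          intro z hz
          have hz2 : z.2 = 0 := hz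
          have hx1 : x.1 ≠ 0 := by
            intro h1
            exact hx0 (Prod.ext h1 hx2)
          have : (z.1 * x.1⁻¹) • x = z := by
            have : (z.1 * x.1⁻¹) • x = (z.1 * x.1⁻¹ * x.1, (z.1 * x.1⁻¹) • x.2) := rfl
            rw [this, hx2, smul_zero, mul_assoc, inv_mul_cancel₀ hx1, mul_one]
            exact (Prod.ext rfl hz2.symm)
          rw [← this]
          exact D.smul_mem _ hx
        set φ : D →ₗ[𝔽] V := (LinearMap.snd 𝔽 𝔽 V).domRestrict D with hφ
        have hφinj : Function.Injective φ := by
          intro a b h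
          have hsub : ((a : 𝔽 × V) - b) ∈ D := sub_mem a.2 b.2
          have h2 : ((a : 𝔽 × V) - b).2 = 0 := by
            have : (a : 𝔽 × V).2 = (b : 𝔽 × V).2 := h
            simp [this]
          exact Subtype.ext (sub_eq_zero.mp (hdisj _ hsub h2))
        set E : Submodule 𝔽 V := LinearMap.range φ with hEdef
        have hE : finrank 𝔽 E = m := by
          rw [hEdef, LinearMap.finrank_range_of_inj hφinj, hD]
        set ψ := LinearEquiv.ofInjective φ hφinj with hψ
        set f : E →ₗ[𝔽] 𝔽 :=
          ((LinearMap.fst 𝔽 𝔽 V).domRestrict D).comp (ψ.symm : E →ₗ[𝔽] D) with hfdef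
        refine ⟨⟨⟨E, hE⟩, f⟩, ?_⟩
        apply Subtype.ext
        show LinearMap.range (LinearMap.prod f E.subtype) = D
        ext x
        constructor
        · rintro ⟨e, rfl⟩
          have hco : (((ψ.symm e : D) : 𝔽 × V)).2 = (e : V) := by
            have := ψ.apply_symm_apply e
            calc (((ψ.symm e : D) : 𝔽 × V)).2 = φ (ψ.symm e) := rfl
              _ = ((ψ (ψ.symm e) : E) : V) := by rw [hψ]; rfl
              _ = (e : V) := by rw [this]
          have : LinearMap.prod f E.subtype e = ((ψ.symm e : D) : 𝔽 × V) :=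
            Prod.ext rfl hco.symm
          rw [this]
          exact (ψ.symm e).2
        · intro hx
          refine ⟨ψ ⟨x, hx⟩, ?_⟩
          have h1 : f (ψ ⟨x, hx⟩) = x.1 := by
            rw [hfdef]
            simp only [LinearMap.comp_apply]
            rw [LinearEquiv.coe_coe, LinearEquiv.symm_apply_apply]
            rfl
          have h2 : E.subtype (ψ ⟨x, hx⟩) = x.2 := by
            calc E.subtype (ψ ⟨x, hx⟩) = φ ⟨x, hx⟩ := by rw [hψ]; rfl
              _ = x.2 := rfl
          exact Prod.ext h1 h2
  rw [← key]
  letI : Fintype {E : Submodule 𝔽 V // finrank 𝔽 E = m} := Fintype.ofFinite _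
  letI : ∀ E : {E : Submodule 𝔽 V // finrank 𝔽 E = m},
      Fintype ((E.1 : Submodule 𝔽 V) →ₗ[𝔽] 𝔽) := fun E =>
    @Fintype.ofFinite _ (Module.finite_of_finite 𝔽)
  rw [Nat.card_eq_fintype_card, Fintype.card_sigma]
  have hterm : ∀ E : {E : Submodule 𝔽 V // finrank 𝔽 E = m},
      Fintype.card ((E.1 : Submodule 𝔽 V) →ₗ[𝔽] 𝔽) = q ^ m := by
    intro E
    rw [card_eq_pow_finrank (K := 𝔽), hq]
    congr 1
    rw [Module.finrank_linearMap, finrank_self, mul_one, E.2]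
  rw [Finset.sum_congr rfl (fun E _ => hterm E), Finset.sum_const, smul_eq_mul,
    Nat.card_eq_fintype_card, Fintype.card, mul_comm]

end Aux

theorem stmt13 (q k t : ℕ) (ht : 2 ≤ t) (htk : t ≤ k)
    (𝔽 : Type*) [Field 𝔽] [Fintype 𝔽] (hq : Fintype.card 𝔽 = q)
    (W : Type*) [AddCommGroup W] [Module 𝔽 W] [FiniteDimensional 𝔽 W]
    (hW : finrank 𝔽 W = k)
    (y : Submodule 𝔽 W) (hy : finrank 𝔽 y = 1) :
    Nat.card {D : Submodule 𝔽 W // finrank 𝔽 D = t - 1 ∧ ¬ y ≤ D}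
      = q ^ (t - 1)
        * Nat.card {D : Submodule 𝔽 (Fin (k - 1) → 𝔽) // finrank 𝔽 D = t - 1} := by
  classical
  set V := Fin (k - 1) → 𝔽 with hV
  obtain ⟨H, hH⟩ := Submodule.exists_isCompl y
  have hHrank : finrank 𝔽 H = k - 1 := by
    have h3 := Submodule.finrank_add_eq_of_isCompl hH
    rw [hy, hW] at h3
    omega
  obtain ⟨e₂⟩ := FiniteDimensional.nonempty_linearEquiv_of_finrank_eq
    (show finrank 𝔽 y = finrank 𝔽 𝔽 by rw [hy, finrank_self])
  obtain ⟨e₃⟩ := FiniteDimensional.nonempty_linearEquiv_of_finrank_eq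
    (show finrank 𝔽 H = finrank 𝔽 V by
      rw [hHrank]; exact (Module.finrank_fin_fun 𝔽).symm)
  set e : W ≃ₗ[𝔽] 𝔽 × V :=
    (Submodule.prodEquivOfIsCompl y H hH).symm.trans (e₂.prodCongr e₃) with he
  have hey : ∀ w : y, e ↑w = (e₂ w, 0) := by
    intro w
    rw [he]
    simp only [LinearEquiv.trans_apply, Submodule.prodEquivOfIsCompl_symm_apply_left]
    show (e₂ w, e₃ 0) = (e₂ w, 0)
    rw [map_zero]
  have hmap : Submodule.map (e : W →ₗ[𝔽] 𝔽 × V) y = Submodule.fst 𝔽 𝔽 V := by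
    apply le_antisymm
    · intro z hz
      rw [Submodule.mem_map] at hz
      obtain ⟨x, hx, rfl⟩ := hz
      have h7 : (e : W →ₗ[𝔽] 𝔽 × V) x = (e₂ ⟨x, hx⟩, 0) := hey ⟨x, hx⟩
      rw [h7]
      simp [Submodule.fst]
    · intro z hz
      have hz2 : z.2 = 0 := by simpa [Submodule.fst] using hz
      refine ⟨↑(e₂.symm z.1), (e₂.symm z.1).2, ?_⟩
      show e ↑(e₂.symm z.1) = z
      rw [hey (e₂.symm z.1)]
      exact Prod.ext (by simp) hz2.symm
  have hcard : Nat.card {D : Submodule 𝔽 W // finrank 𝔽 D = t - 1 ∧ ¬ y ≤ D}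
      = Nat.card {D : Submodule 𝔽 (𝔽 × V) //
          finrank 𝔽 D = t - 1 ∧ ¬ Submodule.fst 𝔽 𝔽 V ≤ D} := by
    apply Nat.card_congr
    refine Equiv.subtypeEquiv (Submodule.orderIsoMapComap e).toEquiv ?_
    intro D
    have h6 : (Submodule.orderIsoMapComap e) D = Submodule.map (e : W →ₗ[𝔽] 𝔽 × V) D := rfl
    rw [RelIso.coe_fn_toEquiv, h6]
    constructor
    · rintro ⟨hr, hny⟩
      refine ⟨by rw [LinearEquiv.finrank_map_eq, hr], fun hle => hny ?_⟩
      rw [← hmap] at hle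
      intro x hx
      have := hle ⟨x, hx, rfl⟩
      obtain ⟨x', hx', hxx⟩ := this
      rwa [← e.injective hxx]
    · rintro ⟨hr, hnf⟩
      refine ⟨by rw [LinearEquiv.finrank_map_eq] at hr; exact hr, fun hle => hnf ?_⟩
      rw [← hmap]
      exact Submodule.map_mono hle
  rw [hcard, stmt13_aux q (t - 1) hq]
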